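/- Let a > 0, |u| < √(1+4a²), write u = √(1+4a²)cos θ_c, θ_c ∈ (0,π), z_c^± = S(√(1+4a²)e^{±iθ_c}) with S(w)=(w+1/w)/2, and ρ(u) = (2/(π(1+4a²)))√(1+4a²-u²). Then z_c^±/(a² ρ(u)) = π((1+2a²)/(2a²)) cot θ_c ± πi. In particular Im(z_c^+/(a²ρ(u))) = π. -/

import Mathlib

open scoped Real
open Complex

/-- With `z_c^± = S(√(1+4a²)e^{±iθ_c})` and `ρ(u)` the semicircle density,
`z_c^±/(a²ρ(u)) = π((1+2a²)/(2a²)) cot θ_c ± πi`; in particular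
`Im(z_c^+/(a²ρ(u))) = π`. -/
theorem critical_point_identity (a : ℝ) (ha : 0 < a) (θc : ℝ)
    (hθc : θc ∈ Set.Ioo 0 Real.pi)
    (u : ℝ) (hu : u = Real.sqrt (1 + 4 * a^2) * Real.cos θc)
    (hu' : |u| < Real.sqrt (1 + 4 * a^2))
    (ρu : ℝ) (hρ : ρu = (2 / (π * (1 + 4 * a^2))) * Real.sqrt (1 + 4 * a^2 - u^2))
    (zcp zcm : ℂ)
    (hzp : zcp = ((Real.sqrt (1 + 4 * a^2) : ℂ) * Complex.exp (I * θc)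
        + Complex.exp (-(I * θc)) / (Real.sqrt (1 + 4 * a^2) : ℂ)) / 2)
    (hzm : zcm = ((Real.sqrt (1 + 4 * a^2) : ℂ) * Complex.exp (-(I * θc))
        + Complex.exp (I * θc) / (Real.sqrt (1 + 4 * a^2) : ℂ)) / 2) :
    zcp / ((a : ℂ)^2 * (ρu : ℂ))
      = ((π * ((1 + 2 * a^2) / (2 * a^2)) * (Real.cos θc / Real.sin θc) : ℝ) : ℂ)
        + π * I
    ∧ zcm / ((a : ℂ)^2 * (ρu : ℂ))
      = ((π * ((1 + 2 * a^2) / (2 * a^2)) * (Real.cos θc / Real.sin θc) : ℝ) : ℂ)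
        - π * I
    ∧ (zcp / ((a : ℂ)^2 * (ρu : ℂ))).im = π := by
  obtain ⟨hθ0, hθπ⟩ := hθc
  set R := Real.sqrt (1 + 4 * a^2) with hRdef
  have h4 : (0:ℝ) < 1 + 4 * a^2 := by positivity
  have hR : 0 < R := Real.sqrt_pos.mpr h4
  have hR2 : R ^ 2 = 1 + 4 * a^2 := Real.sq_sqrt h4.le
  have hs : 0 < Real.sin θc := Real.sin_pos_of_pos_of_lt_pi hθ0 hθπ
  have hπ : (0:ℝ) < π := Real.pi_pos
  have hsqrt : Real.sqrt (1 + 4 * a^2 - u^2) = R * Real.sin θc := by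
    have : 1 + 4 * a^2 - u^2 = (R * Real.sin θc)^2 := by
      rw [hu]
      have := Real.sin_sq_add_cos_sq θc
      nlinarith [hR2]
    rw [this, Real.sqrt_sq (by positivity)]
  have hρ' : ρu = 2 * Real.sin θc / (π * R) := by
    rw [hρ, hsqrt, ← hR2]
    field_simp
  have hcast : ((a:ℂ)^2 * (ρu : ℂ)) = ((a^2 * ρu : ℝ) : ℂ) := by push_cast; ring
  have hc0 : a^2 * ρu ≠ 0 := by
    rw [hρ']; positivity
  have hep : Complex.exp (I * θc) = ((Real.cos θc : ℝ) : ℂ) + ((Real.sin θc : ℝ) : ℂ) * I := by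
    rw [mul_comm, Complex.exp_mul_I]
    push_cast
    ring
  have hem : Complex.exp (-(I * θc)) = ((Real.cos θc : ℝ) : ℂ) + ((-Real.sin θc : ℝ) : ℂ) * I := by
    have h1 : -(I * (θc:ℂ)) = ((-θc : ℝ) : ℂ) * I := by push_cast; ring
    rw [h1, Complex.exp_mul_I]
    push_cast
    simp [Complex.cos_neg, Complex.sin_neg]
  have hdiv : ∀ x y : ℝ, ((x:ℂ) + (y:ℂ) * I) / (R : ℂ)
      = ((x / R : ℝ) : ℂ) + ((y / R : ℝ) : ℂ) * I := by
    intro x y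
    have hRc : (R : ℂ) ≠ 0 := by exact_mod_cast hR.ne'
    field_simp
    push_cast
    field_simp
  have hzpre : zcp.re = (R + 1/R) * Real.cos θc / 2 := by
    rw [hzp, hep, hem, hdiv]
    simp [Complex.cos_ofReal_re, Complex.sin_ofReal_re, Complex.cos_ofReal_im, Complex.sin_ofReal_im]
    field_simp
  have hzpim : zcp.im = (R - 1/R) * Real.sin θc / 2 := by
    rw [hzp, hep, hem, hdiv]
    simp [Complex.cos_ofReal_re, Complex.sin_ofReal_re, Complex.cos_ofReal_im, Complex.sin_ofReal_im]
    field_simp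
    ring
  have hzmre : zcm.re = (R + 1/R) * Real.cos θc / 2 := by
    rw [hzm, hep, hem, hdiv]
    simp [Complex.cos_ofReal_re, Complex.sin_ofReal_re, Complex.cos_ofReal_im, Complex.sin_ofReal_im]
    field_simp
  have hzmim : zcm.im = -((R - 1/R) * Real.sin θc / 2) := by
    rw [hzm, hep, hem, hdiv]
    simp [Complex.cos_ofReal_re, Complex.sin_ofReal_re, Complex.cos_ofReal_im, Complex.sin_ofReal_im]
    field_simp
    ring
  have hrere : (R + 1/R) * Real.cos θc / 2 / (a^2 * ρu)
      = π * ((1 + 2 * a^2) / (2 * a^2)) * (Real.cos θc / Real.sin θc) := by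
    rw [hρ']
    field_simp
    linear_combination (Real.cos θc) * hR2
  have himim : (R - 1/R) * Real.sin θc / 2 / (a^2 * ρu) = π := by
    rw [hρ']
    field_simp
    linear_combination (1 : ℝ) * hR2
  have hP : zcp / ((a : ℂ)^2 * (ρu : ℂ))
      = ((π * ((1 + 2 * a^2) / (2 * a^2)) * (Real.cos θc / Real.sin θc) : ℝ) : ℂ)
        + π * I := by
    rw [hcast]
    apply Complex.ext
    · simp only [Complex.div_ofReal_re, Complex.add_re, Complex.ofReal_re, Complex.mul_re,
        Complex.I_re, Complex.ofReal_im, Complex.I_im, hzpre, hrere]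
      ring
    · simp only [Complex.div_ofReal_im, Complex.add_im, Complex.ofReal_im, Complex.mul_im,
        Complex.I_im, Complex.I_re, Complex.ofReal_re, hzpim, himim]
      ring
  have hM : zcm / ((a : ℂ)^2 * (ρu : ℂ))
      = ((π * ((1 + 2 * a^2) / (2 * a^2)) * (Real.cos θc / Real.sin θc) : ℝ) : ℂ)
        - π * I := by
    rw [hcast]
    apply Complex.ext
    · simp only [Complex.div_ofReal_re, Complex.sub_re, Complex.ofReal_re, Complex.mul_re,
        Complex.I_re, Complex.ofReal_im, Complex.I_im, hzmre, hrere]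
      ring
    · simp only [Complex.div_ofReal_im, hzmim, Complex.sub_im, Complex.ofReal_im,
        Complex.mul_im, Complex.I_im, Complex.I_re, Complex.ofReal_re]
      rw [neg_div, himim]
      ring
  refine ⟨hP, hM, ?_⟩
  rw [hP]
  simp only [Complex.add_im, Complex.ofReal_im, Complex.mul_im, Complex.I_im, Complex.I_re,
    Complex.ofReal_re]
  ring
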